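/- Let A be a finite-dimensional commutative local ℂ-algebra with maximal ideal m and residue field ℂ, regarded as a normed ℂ-algebra. Let a, b ∈ m (so a, b are nilpotent), let j, k be nonzero integers, let ε > 0, and let γ(t) = ε·e^{2πit}. Consider the iterated integral I := ∫_{0 ≤ t₁ ≤ t₂ ≤ 1} (−a·j·γ(t₁)^{j−1}γ'(t₁))(1 − aγ(t₁)^j)⁻¹ · (−b·k·γ(t₂)^{k−1}γ'(t₂))(1 − bγ(t₂)^k)⁻¹ dt₁ dt₂, i.e. the iterated integral of d(1 − a x^j)/(1 − a x^j) followed by d(1 − b x^k)/(1 − b x^k) along γ. If j·k > 0 then I = 0. If j·k < 0 then, with d := gcd(|j|,|k|), I = 2πi·sgn(j)·d·log(1 − a^{|k|/d} b^{|j|/d}). -/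

import Mathlib

open MeasureTheory

/-- The simplex `{0 ≤ t 1 ≤ ⋯ ≤ t k ≤ 1}` in `[0,1]^k`. -/
def orderedSimplex (k : ℕ) : Set (Fin k → ℝ) :=
  {t | (∀ i, t i ∈ Set.Icc (0 : ℝ) 1) ∧ ∀ i j : Fin k, i ≤ j → t i ≤ t j}

/-- The circle of radius `ε` around `0`, parametrized by `t ↦ ε e^{2πit}`. -/
noncomputable def circlePath (ε : ℝ) : ℝ → ℂ :=
  fun t => (ε : ℂ) * Complex.exp (2 * Real.pi * Complex.I * (t : ℂ))

/-- `log (1 - u) := -∑_{k ≥ 1} u^k / k`; for `u` nilpotent this is a finite sum. -/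
noncomputable def logOneSub {A : Type*} [NormedCommRing A] [NormedAlgebra ℂ A] (u : A) : A :=
  -∑' k : ℕ, ((k + 1 : ℂ)⁻¹) • u ^ (k + 1)

open Complex

noncomputable def cc : ℂ := 2 * Real.pi * I
noncomputable def EE (p : ℤ) (t : ℝ) : ℂ := Complex.exp ((p:ℂ) * cc * t)
lemma cc_ne : cc ≠ 0 := by simp [cc, Complex.ext_iff, Real.pi_ne_zero]

lemma inv_one_sub_nilpotent {A : Type*} [CommRing A] (u : A) (N : ℕ) (h : u ^ N = 0) :
    Ring.inverse (1 - u) = ∑ i ∈ Finset.range N, u ^ i := by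
  have h1 : (1 - u) * ∑ i ∈ Finset.range N, u ^ i = 1 := by
    have h2 : (∑ i ∈ Finset.range N, u ^ i) * (u - 1) = -1 := by rw [geom_sum_mul u N, h]; ring
    calc (1 - u) * ∑ i ∈ Finset.range N, u ^ i = -((∑ i ∈ Finset.range N, u ^ i) * (u - 1)) := by ring
    _ = 1 := by rw [h2]; ring
  lift (1 - u) to Aˣ using IsUnit.of_mul_eq_one _ h1 with v hv
  rw [Ring.inverse_unit]
  exact Units.inv_eq_of_mul_eq_one_right h1

lemma hasDerivAt_circle (ε : ℝ) (t : ℝ) :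
    HasDerivAt (circlePath ε) (cc * circlePath ε t) t := by
  have h1 : HasDerivAt (fun t : ℝ => (t:ℂ)) 1 t := Complex.ofRealCLM.hasDerivAt
  have h2 := ((h1.const_mul cc).cexp).const_mul (ε:ℂ)
  have : circlePath ε = fun t : ℝ => (ε:ℂ) * Complex.exp (cc * t) := by
    funext s; simp [circlePath, cc]
  rw [this]
  simpa [cc, mul_comm, mul_left_comm, mul_assoc] using h2

lemma circle_ne_zero (ε : ℝ) (hε : 0 < ε) (t : ℝ) : circlePath ε t ≠ 0 :=
  mul_ne_zero (by exact_mod_cast hε.ne') (Complex.exp_ne_zero _)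

lemma circle_zpow (ε : ℝ) (t : ℝ) (p : ℤ) :
    circlePath ε t ^ p = (ε:ℂ) ^ p * EE p t := by
  rw [circlePath, mul_zpow]
  congr 1
  rw [EE, ← Complex.exp_int_mul, cc]
  ring_nf

lemma factor {A : Type*} [NormedCommRing A] [NormedAlgebra ℂ A] (a : A) (N : ℕ) (hN : a ^ N = 0)
    (j : ℤ) (ε t : ℝ) (hε : 0 < ε) :
    -a * algebraMap ℂ A ((j : ℂ) * circlePath ε t ^ (j - 1) * deriv (circlePath ε) t) *
        Ring.inverse (1 - a * algebraMap ℂ A (circlePath ε t ^ j)) =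
      ∑ m ∈ Finset.range N,
        (-((j:ℂ) * cc) * (ε:ℂ) ^ (j * ((m:ℤ) + 1)) * EE (j * ((m:ℤ) + 1)) t) • a ^ (m + 1) := by
  have hne := circle_ne_zero ε hε t
  have hd : deriv (circlePath ε) t = cc * circlePath ε t := (hasDerivAt_circle ε t).deriv
  have h1 : (j : ℂ) * circlePath ε t ^ (j - 1) * deriv (circlePath ε) t
      = ((j:ℂ) * cc) * circlePath ε t ^ j := by
    rw [hd]
    have h2 : circlePath ε t ^ (j - 1) * circlePath ε t = circlePath ε t ^ j := by
      rw [← zpow_add_one₀ hne, sub_add_cancel]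
    calc (j : ℂ) * circlePath ε t ^ (j - 1) * (cc * circlePath ε t)
        = ((j:ℂ) * cc) * (circlePath ε t ^ (j - 1) * circlePath ε t) := by ring
      _ = ((j:ℂ) * cc) * circlePath ε t ^ j := by rw [h2]
  have hinv : Ring.inverse (1 - a * algebraMap ℂ A (circlePath ε t ^ j))
      = ∑ i ∈ Finset.range N, (a * algebraMap ℂ A (circlePath ε t ^ j)) ^ i := by
    apply inv_one_sub_nilpotent
    rw [mul_pow, hN, zero_mul]
  rw [h1, hinv, Finset.mul_sum]
  refine Finset.sum_congr rfl fun m _ => ?_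
  have hz : (circlePath ε t ^ j) ^ (m + 1) = (ε:ℂ) ^ (j * ((m:ℤ) + 1)) * EE (j * ((m:ℤ) + 1)) t := by
    rw [← circle_zpow, zpow_mul, ← zpow_natCast (circlePath ε t ^ j) (m + 1)]
    norm_num
  have hr : (-((j:ℂ) * cc) * (ε:ℂ) ^ (j * ((m:ℤ) + 1)) * EE (j * ((m:ℤ) + 1)) t)
      = -((j:ℂ) * cc) * ((ε:ℂ) ^ (j * ((m:ℤ) + 1)) * EE (j * ((m:ℤ) + 1)) t) := by ring
  rw [mul_pow, ← map_pow, hr, ← hz, Algebra.smul_def]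
  simp only [map_mul, map_neg, map_pow]
  ring

lemma EE_cont (p : ℤ) : Continuous (EE p) := by
  exact Complex.continuous_exp.comp (by continuity)

lemma EE_int (p : ℤ) (hp : p ≠ 0) (y : ℝ) :
    ∫ t in (0:ℝ)..y, EE p t = (EE p y - 1) / (p * cc) := by
  have h : (p:ℂ) * cc ≠ 0 := mul_ne_zero (Int.cast_ne_zero.2 hp) cc_ne
  have := integral_exp_mul_complex (a := 0) (b := y) h
  simp only [EE]
  rw [show (fun t : ℝ => Complex.exp ((p:ℂ) * cc * t)) = fun t : ℝ => Complex.exp (((p:ℂ)*cc) * t) from rfl, this]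
  simp

lemma EE_one (p : ℤ) : EE p 1 = 1 := by
  have : ((p:ℂ) * cc * (1:ℝ)) = p * (2 * Real.pi * I) := by push_cast [cc]; ring
  rw [EE, this, Complex.exp_int_mul_two_pi_mul_I]

lemma EE_int01 (p : ℤ) : ∫ t in (0:ℝ)..1, EE p t = if p = 0 then 1 else 0 := by
  by_cases hp : p = 0
  · simp [hp, EE]
  · rw [EE_int p hp 1, EE_one, if_neg hp]; simp

lemma EE_mul (p q : ℤ) (t : ℝ) : EE p t * EE q t = EE (p + q) t := by
  rw [EE, EE, EE, ← Complex.exp_add]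
  push_cast; ring_nf

def TT : Set (ℝ × ℝ) := {z | z.1 ∈ Set.Icc 0 z.2 ∧ z.2 ∈ Set.Icc (0:ℝ) 1}

lemma simplex_eq : orderedSimplex 2 = (MeasurableEquiv.piFinTwo fun _ => ℝ) ⁻¹' TT := by
  ext t
  simp only [orderedSimplex, TT, Set.mem_setOf_eq, Set.mem_preimage, MeasurableEquiv.piFinTwo_apply,
    Set.mem_Icc, Fin.forall_fin_two]
  constructor
  · rintro ⟨⟨⟨h0, h1⟩, ⟨h2, h3⟩⟩, hmono⟩
    exact ⟨⟨h0, hmono.1.2 (by decide)⟩, h2, h3⟩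
  · rintro ⟨⟨h0, h01⟩, h2, h3⟩
    exact ⟨⟨⟨h0, h01.trans h3⟩, h0.trans h01, h3⟩, ⟨fun _ => le_rfl, fun _ => h01⟩,
      fun h => absurd h (by decide), fun _ => le_rfl⟩

lemma TT_compact : IsCompact TT := by
  have hclosed : IsClosed TT := by
    have h1 : IsClosed {z : ℝ × ℝ | 0 ≤ z.1} := isClosed_le continuous_const continuous_fst
    have h2 : IsClosed {z : ℝ × ℝ | z.1 ≤ z.2} := isClosed_le continuous_fst continuous_snd
    have h3 : IsClosed {z : ℝ × ℝ | 0 ≤ z.2} := isClosed_le continuous_const continuous_snd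
    have h4 : IsClosed {z : ℝ × ℝ | z.2 ≤ 1} := isClosed_le continuous_snd continuous_const
    have : TT = ({z : ℝ × ℝ | 0 ≤ z.1} ∩ {z | z.1 ≤ z.2}) ∩ ({z | 0 ≤ z.2} ∩ {z | z.2 ≤ 1}) := by
      ext z; simp only [TT, Set.mem_Icc, Set.mem_setOf_eq, Set.mem_inter_iff]
    rw [this]; exact ((h1.inter h2).inter (h3.inter h4))
  refine IsCompact.of_isClosed_subset (isCompact_Icc (a := ((0:ℝ),(0:ℝ))) (b := (1,1))) hclosed ?_
  rintro ⟨x, y⟩ ⟨⟨hx0, hxy⟩, hy0, hy1⟩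
  exact ⟨⟨hx0, hy0⟩, ⟨hxy.trans hy1, hy1⟩⟩

lemma TT_meas : MeasurableSet TT := TT_compact.isClosed.measurableSet

lemma triangle_int (p q : ℤ) (hp : p ≠ 0) (hq : q ≠ 0) :
    ∫ t in orderedSimplex 2, EE p (t 0) * EE q (t 1) =
      if p + q = 0 then ((p:ℂ) * cc)⁻¹ else 0 := by
  have hpc : (p:ℂ) * cc ≠ 0 := mul_ne_zero (Int.cast_ne_zero.2 hp) cc_ne
  set F : ℝ × ℝ → ℂ := fun z => EE p z.1 * EE q z.2 with hF
  have hFc : Continuous F := ((EE_cont p).comp continuous_fst).mul ((EE_cont q).comp continuous_snd)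
  have step1 : ∫ t in orderedSimplex 2, EE p (t 0) * EE q (t 1) = ∫ z in TT, F z := by
    rw [simplex_eq]
    exact (volume_preserving_piFinTwo fun _ => ℝ).setIntegral_preimage_emb
      (MeasurableEquiv.piFinTwo fun _ => ℝ).measurableEmbedding F TT
  have hInt : IntegrableOn F TT := hFc.continuousOn.integrableOn_compact TT_compact
  have step2 : ∫ z in TT, F z = ∫ y in Set.Icc (0:ℝ) 1, ∫ x in Set.Icc 0 y, F (x, y) := by
    rw [← integral_indicator TT_meas]
    rw [Measure.volume_eq_prod, integral_prod_symm _ ((integrable_indicator_iff TT_meas).2 (by rwa [← Measure.volume_eq_prod]))]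
    rw [← integral_indicator measurableSet_Icc]
    congr 1
    ext y
    have hpt : ∀ x, TT.indicator F (x, y) =
        (Set.Icc (0:ℝ) 1).indicator (fun y' => (Set.Icc (0:ℝ) y').indicator (fun x' => F (x', y')) x) y := by
      intro x
      simp only [Set.indicator_apply, Set.mem_Icc, TT, Set.mem_setOf_eq]
      by_cases hy' : 0 ≤ y ∧ y ≤ 1 <;> by_cases hx' : 0 ≤ x ∧ x ≤ y <;>
        simp [hy', hx']
    simp only [hpt]
    by_cases hy : y ∈ Set.Icc (0:ℝ) 1
    · simp only [Set.indicator_of_mem hy]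
      exact integral_indicator measurableSet_Icc
    · simp [Set.indicator_of_notMem hy]
  have inner : ∀ y ∈ Set.Icc (0:ℝ) 1, ∫ x in Set.Icc 0 y, F (x, y)
      = ((p:ℂ)*cc)⁻¹ * (EE (p+q) y - EE q y) := by
    intro y hy
    have h0y : (0:ℝ) ≤ y := hy.1
    calc ∫ x in Set.Icc 0 y, F (x, y) = (∫ x in Set.Icc (0:ℝ) y, EE p x) * EE q y := by
          rw [← integral_mul_const]
      _ = (∫ x in (0:ℝ)..y, EE p x) * EE q y := by
          rw [MeasureTheory.integral_Icc_eq_integral_Ioc, intervalIntegral.integral_of_le h0y]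
      _ = ((EE p y - 1) / ((p:ℂ)*cc)) * EE q y := by rw [EE_int p hp y]
      _ = ((p:ℂ)*cc)⁻¹ * (EE (p+q) y - EE q y) := by
          rw [← EE_mul]; field_simp
  have step3 : ∫ y in Set.Icc (0:ℝ) 1, ∫ x in Set.Icc 0 y, F (x, y)
      = ((p:ℂ)*cc)⁻¹ * ((∫ y in (0:ℝ)..1, EE (p+q) y) - ∫ y in (0:ℝ)..1, EE q y) := by
    rw [setIntegral_congr_fun measurableSet_Icc inner]
    rw [integral_const_mul]
    congr 1
    rw [MeasureTheory.integral_Icc_eq_integral_Ioc, ← intervalIntegral.integral_of_le zero_le_one,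
      intervalIntegral.integral_sub ((EE_cont (p+q)).intervalIntegrable _ _)
        ((EE_cont q).intervalIntegrable _ _)]
  rw [step1, step2, step3, EE_int01, EE_int01, if_neg hq]
  by_cases h : p + q = 0 <;> simp [h, hpc]

lemma simplex_compact : IsCompact (orderedSimplex 2) := by
  have h : orderedSimplex 2 = (Homeomorph.piFinTwo fun _ : Fin 2 => ℝ) ⁻¹' TT := by
    rw [simplex_eq]; rfl
  rw [h]; exact (Homeomorph.isCompact_preimage _).2 TT_compact

lemma master {A : Type*} [NormedCommRing A] [NormedAlgebra ℂ A] [CompleteSpace A]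
    (a b : A) (N : ℕ) (hNa : a ^ N = 0) (hNb : b ^ N = 0)
    (j k : ℤ) (hj : j ≠ 0) (hk : k ≠ 0) (ε : ℝ) (hε : 0 < ε) :
    (∫ t in orderedSimplex 2,
        (-a * algebraMap ℂ A ((j : ℂ) * circlePath ε (t 0) ^ (j - 1) *
              deriv (circlePath ε) (t 0)) *
            Ring.inverse (1 - a * algebraMap ℂ A (circlePath ε (t 0) ^ j))) *
        (-b * algebraMap ℂ A ((k : ℂ) * circlePath ε (t 1) ^ (k - 1) *
              deriv (circlePath ε) (t 1)) *
            Ring.inverse (1 - b * algebraMap ℂ A (circlePath ε (t 1) ^ k))))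
    = ∑ p ∈ Finset.range N ×ˢ Finset.range N,
        (if j * ((p.1:ℤ) + 1) + k * ((p.2:ℤ) + 1) = 0 then (k:ℂ) * cc / ((p.1:ℂ) + 1) else 0)
          • (a ^ (p.1 + 1) * b ^ (p.2 + 1)) := by
  have hε0 : (ε:ℂ) ≠ 0 := by exact_mod_cast hε.ne'
  set P : ℕ → ℤ := fun m => j * ((m:ℤ) + 1) with hP
  set Q : ℕ → ℤ := fun n => k * ((n:ℤ) + 1) with hQ
  set g : ℕ × ℕ → (Fin 2 → ℝ) → A := fun p t =>
    ((-((j:ℂ) * cc) * (ε:ℂ) ^ P p.1 * EE (P p.1) (t 0)) *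
     (-((k:ℂ) * cc) * (ε:ℂ) ^ Q p.2 * EE (Q p.2) (t 1))) • (a ^ (p.1 + 1) * b ^ (p.2 + 1)) with hg
  have hpt : ∀ t : Fin 2 → ℝ,
      (-a * algebraMap ℂ A ((j : ℂ) * circlePath ε (t 0) ^ (j - 1) *
              deriv (circlePath ε) (t 0)) *
            Ring.inverse (1 - a * algebraMap ℂ A (circlePath ε (t 0) ^ j))) *
        (-b * algebraMap ℂ A ((k : ℂ) * circlePath ε (t 1) ^ (k - 1) *
              deriv (circlePath ε) (t 1)) *
            Ring.inverse (1 - b * algebraMap ℂ A (circlePath ε (t 1) ^ k)))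
      = ∑ p ∈ Finset.range N ×ˢ Finset.range N, g p t := by
    intro t
    rw [factor a N hNa j ε (t 0) hε, factor b N hNb k ε (t 1) hε, Finset.sum_mul_sum,
      Finset.sum_product]
    exact Finset.sum_congr rfl fun m _ => Finset.sum_congr rfl fun n _ => (smul_mul_smul_comm _ _ _ _)
  have hcont : ∀ p : ℕ × ℕ, Continuous (g p) := by
    intro p
    apply Continuous.smul _ (continuous_const (y := a ^ (p.1 + 1) * b ^ (p.2 + 1)))
    exact (continuous_const.mul ((EE_cont _).comp (continuous_apply 0))).mul
      (continuous_const.mul ((EE_cont _).comp (continuous_apply 1)))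
  calc (∫ t in orderedSimplex 2,
        (-a * algebraMap ℂ A ((j : ℂ) * circlePath ε (t 0) ^ (j - 1) *
              deriv (circlePath ε) (t 0)) *
            Ring.inverse (1 - a * algebraMap ℂ A (circlePath ε (t 0) ^ j))) *
        (-b * algebraMap ℂ A ((k : ℂ) * circlePath ε (t 1) ^ (k - 1) *
              deriv (circlePath ε) (t 1)) *
            Ring.inverse (1 - b * algebraMap ℂ A (circlePath ε (t 1) ^ k))))
      = ∫ t in orderedSimplex 2, ∑ p ∈ Finset.range N ×ˢ Finset.range N, g p t := by
        simp only [hpt]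
    _ = ∑ p ∈ Finset.range N ×ˢ Finset.range N, ∫ t in orderedSimplex 2, g p t := by
        exact integral_finset_sum _ fun p _ =>
          ((hcont p).continuousOn.integrableOn_compact simplex_compact)
    _ = ∑ p ∈ Finset.range N ×ˢ Finset.range N,
        (if j * ((p.1:ℤ) + 1) + k * ((p.2:ℤ) + 1) = 0 then (k:ℂ) * cc / ((p.1:ℂ) + 1) else 0)
          • (a ^ (p.1 + 1) * b ^ (p.2 + 1)) := by
        refine Finset.sum_congr rfl fun p hp => ?_
        rw [hg]
        rw [integral_smul_const]
        congr 1
        have hco : (fun t : Fin 2 → ℝ =>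
            (-((j:ℂ) * cc) * (ε:ℂ) ^ P p.1 * EE (P p.1) (t 0)) *
            (-((k:ℂ) * cc) * (ε:ℂ) ^ Q p.2 * EE (Q p.2) (t 1)))
            = fun t : Fin 2 → ℝ =>
              (((j:ℂ) * cc) * ((k:ℂ) * cc) * ((ε:ℂ) ^ P p.1 * (ε:ℂ) ^ Q p.2)) •
                (EE (P p.1) (t 0) * EE (Q p.2) (t 1)) := by
          funext t; rw [smul_eq_mul]; ring
        rw [hco, integral_smul, triangle_int _ _ (mul_ne_zero hj (by omega)) (mul_ne_zero hk (by omega))]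
        by_cases hc : P p.1 + Q p.2 = 0
        · rw [if_pos hc, if_pos hc, smul_eq_mul, ← zpow_add₀ hε0, hc, zpow_zero, mul_one]
          have hm1 : ((p.1:ℂ) + 1) ≠ 0 := Nat.cast_add_one_ne_zero p.1
          have hPne : ((P p.1 : ℤ) : ℂ) ≠ 0 := by
            exact_mod_cast (Int.cast_ne_zero (α := ℂ)).2 (mul_ne_zero hj (by omega) : P p.1 ≠ 0)
          have hPc : ((P p.1 : ℤ) : ℂ) = (j:ℂ) * ((p.1:ℂ) + 1) := by rw [hP]; push_cast; ring
          rw [hPc] at hPne ⊢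
          rw [← div_eq_mul_inv, div_eq_div_iff (mul_ne_zero hPne cc_ne) hm1]
          ring
        · rw [if_neg hc, if_neg hc, smul_zero]

lemma reindex {A : Type*} [NormedCommRing A] [NormedAlgebra ℂ A]
    (a b : A) (N J K d J' K' : ℕ) (σ : ℂ) (hd : 0 < d)
    (hNa : ∀ e, N ≤ e → a ^ e = 0) (hNb : ∀ e, N ≤ e → b ^ e = 0)
    (hJ : J = d * J') (hK : K = d * K') (cop : Nat.Coprime J' K')
    (hJ' : 0 < J') (hK' : 0 < K') :
    ∑ p ∈ Finset.range N ×ˢ Finset.range N,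
      (if J * (p.1 + 1) = K * (p.2 + 1) then σ * (K:ℂ) * cc / ((p.1:ℂ) + 1) else 0)
        • (a ^ (p.1 + 1) * b ^ (p.2 + 1))
    = ∑ r ∈ Finset.range N, (σ * (d:ℂ) * cc * ((r:ℂ) + 1)⁻¹) • (a ^ K' * b ^ J') ^ (r + 1) := by
  have hdec : ∀ m n : ℕ, J * (m + 1) = K * (n + 1) →
      ∃ s : ℕ, 1 ≤ s ∧ m + 1 = K' * s ∧ n + 1 = J' * s ∧ (m + 1) / K' = s := by
    intro m n hcond
    have h1 : J' * (m + 1) = K' * (n + 1) := by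
      apply Nat.eq_of_mul_eq_mul_left hd
      calc d * (J' * (m + 1)) = J * (m + 1) := by rw [hJ, mul_assoc]
        _ = K * (n + 1) := hcond
        _ = d * (K' * (n + 1)) := by rw [hK, mul_assoc]
    have h2 : K' ∣ (m + 1) * J' := ⟨n + 1, by rw [mul_comm, h1]⟩
    have h3 : K' ∣ m + 1 := Nat.Coprime.dvd_of_dvd_mul_right cop.symm h2
    obtain ⟨s, hs⟩ := h3
    have hs1 : 1 ≤ s := by
      rcases Nat.eq_zero_or_pos s with rfl | h
      · simp at hs
      · exact h
    have hns : n + 1 = J' * s := by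
      apply Nat.eq_of_mul_eq_mul_left hK'
      calc K' * (n + 1) = J' * (m + 1) := h1.symm
        _ = J' * (K' * s) := by rw [hs]
        _ = K' * (J' * s) := by ring
    exact ⟨s, hs1, hs, hns, by rw [hs, Nat.mul_div_cancel_left _ hK']⟩
  have key : ∀ p : ℕ × ℕ,
      (if J * (p.1 + 1) = K * (p.2 + 1) then σ * (K:ℂ) * cc / ((p.1:ℂ) + 1) else 0)
        • (a ^ (p.1 + 1) * b ^ (p.2 + 1))
      = if J * (p.1 + 1) = K * (p.2 + 1) then
          (σ * (K:ℂ) * cc / ((p.1:ℂ) + 1)) • (a ^ (p.1 + 1) * b ^ (p.2 + 1)) else 0 := by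
    intro p; rw [ite_smul, zero_smul]
  have hpow : ∀ r : ℕ, (a ^ K' * b ^ J') ^ (r + 1) = a ^ (K' * (r + 1)) * b ^ (J' * (r + 1)) := by
    intro r; rw [mul_pow, ← pow_mul, ← pow_mul]
  simp only [key, hpow]
  rw [← Finset.sum_filter]
  rw [← Finset.sum_filter_of_ne (p := fun r => K' * (r + 1) ≤ N ∧ J' * (r + 1) ≤ N)
    (fun r hr hne => by
      by_contra hcon
      apply hne
      rcases le_or_gt (K' * (r + 1)) N with h1 | h1
      · rcases le_or_gt (J' * (r + 1)) N with h2 | h2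
        · exact absurd ⟨h1, h2⟩ hcon
        · rw [hNb _ h2.le, mul_zero, smul_zero]
      · rw [hNa _ h1.le, zero_mul, smul_zero])]
  refine Finset.sum_nbij' (fun p : ℕ × ℕ => (p.1 + 1) / K' - 1)
    (fun r => (K' * (r + 1) - 1, J' * (r + 1) - 1)) ?_ ?_ ?_ ?_ ?_
  · intro p hp
    simp only [Finset.mem_filter, Finset.mem_product, Finset.mem_range] at hp ⊢
    obtain ⟨⟨hm, hn⟩, hcond⟩ := hp
    obtain ⟨s, hs1, hms, hns, hdiv⟩ := hdec p.1 p.2 hcond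
    rw [hdiv, Nat.sub_add_cancel hs1]
    have h5 : s ≤ K' * s := Nat.le_mul_of_pos_left s hK'
    rw [← hms] at h5
    exact ⟨by omega, by rw [← hms]; omega, by rw [← hns]; omega⟩
  · intro r hr
    simp only [Finset.mem_filter, Finset.mem_product, Finset.mem_range] at hr ⊢
    obtain ⟨hrN, hK'N, hJ'N⟩ := hr
    have h1 : 1 ≤ K' * (r + 1) := Nat.mul_pos hK' (Nat.succ_pos r)
    have h2 : 1 ≤ J' * (r + 1) := Nat.mul_pos hJ' (Nat.succ_pos r)
    refine ⟨⟨by omega, by omega⟩, ?_⟩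
    rw [Nat.sub_add_cancel h1, Nat.sub_add_cancel h2, hJ, hK]
    ring
  · intro p hp
    simp only [Finset.mem_filter, Finset.mem_product, Finset.mem_range] at hp
    obtain ⟨⟨hm, hn⟩, hcond⟩ := hp
    obtain ⟨s, hs1, hms, hns, hdiv⟩ := hdec p.1 p.2 hcond
    rw [hdiv, Nat.sub_add_cancel hs1, ← hms, ← hns]
    simp
  · intro r hr
    simp only [Finset.mem_filter, Finset.mem_range] at hr
    have h1 : 1 ≤ K' * (r + 1) := Nat.mul_pos hK' (Nat.succ_pos r)
    simp only [Nat.sub_add_cancel h1, Nat.mul_div_cancel_left _ hK']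
    omega
  · intro p hp
    simp only [Finset.mem_filter, Finset.mem_product, Finset.mem_range] at hp
    obtain ⟨⟨hm, hn⟩, hcond⟩ := hp
    obtain ⟨s, hs1, hms, hns, hdiv⟩ := hdec p.1 p.2 hcond
    rw [hdiv, Nat.sub_add_cancel hs1, ← hms, ← hns]
    congr 1
    have hsc : ((s - 1 : ℕ) : ℂ) = (s : ℂ) - 1 := by
      rw [Nat.cast_sub hs1]; norm_num
    have hmc : ((p.1 : ℂ) + 1) = (K' : ℂ) * (s : ℂ) := by exact_mod_cast hms
    have hKc : (K : ℂ) = (d : ℂ) * (K' : ℂ) := by exact_mod_cast hK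
    rw [hsc, hmc, hKc]
    have hK0 : (K' : ℂ) ≠ 0 := Nat.cast_ne_zero.2 hK'.ne'
    have hs0 : (s : ℂ) ≠ 0 := Nat.cast_ne_zero.2 (by omega)
    field_simp
    ring
    rw [mul_assoc _ (s:ℂ), mul_inv_cancel₀ hs0, mul_one]

/-- Let `A` be a finite-dimensional commutative local `ℂ`-algebra (normed `ℂ`-algebra)
with residue field `ℂ`, `a, b` in the maximal ideal (hence nilpotent), `j, k` nonzero
integers and `γ (t) = ε e^{2πit}`.  The iterated integral `I` of `d(1 - a x^j)/(1 - a x^j)`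
followed by `d(1 - b x^k)/(1 - b x^k)` along `γ` equals `0` when `j k > 0`, and equals
`2πi sgn(j) d log (1 - a^{|k|/d} b^{|j|/d})` with `d = gcd (|j|, |k|)` when `j k < 0`. -/
theorem iteratedIntegral_logDeriv_logDeriv
    (A : Type*) [NormedCommRing A] [NormedAlgebra ℂ A] [FiniteDimensional ℂ A]
    [IsLocalRing A]
    (hres : Function.Bijective ((IsLocalRing.residue A).comp (algebraMap ℂ A)))
    (a b : A) (ha : a ∈ IsLocalRing.maximalIdeal A) (hb : b ∈ IsLocalRing.maximalIdeal A)
    (j k : ℤ) (hj : j ≠ 0) (hk : k ≠ 0) (ε : ℝ) (hε : 0 < ε)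
    (I : A)
    (hI : I = ∫ t in orderedSimplex 2,
        (-a * algebraMap ℂ A ((j : ℂ) * circlePath ε (t 0) ^ (j - 1) *
              deriv (circlePath ε) (t 0)) *
            Ring.inverse (1 - a * algebraMap ℂ A (circlePath ε (t 0) ^ j))) *
        (-b * algebraMap ℂ A ((k : ℂ) * circlePath ε (t 1) ^ (k - 1) *
              deriv (circlePath ε) (t 1)) *
            Ring.inverse (1 - b * algebraMap ℂ A (circlePath ε (t 1) ^ k)))) :
    (0 < j * k → I = 0) ∧
      (j * k < 0 →
        I = algebraMap ℂ A (2 * Real.pi * Complex.I * (j.sign : ℂ) * (Nat.gcd j.natAbs k.natAbs : ℂ)) *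
          logOneSub (a ^ (k.natAbs / Nat.gcd j.natAbs k.natAbs) *
            b ^ (j.natAbs / Nat.gcd j.natAbs k.natAbs))) := by
  have hC : CompleteSpace A := FiniteDimensional.complete ℂ A
  have hart : IsArtinianRing A := isArtinian_of_tower ℂ inferInstance
  obtain ⟨n0, hn0⟩ := IsArtinianRing.isNilpotent_jacobson_bot (R := A)
  rw [IsLocalRing.jacobson_eq_maximalIdeal ⊥ bot_ne_top] at hn0
  have hnil : ∀ x ∈ IsLocalRing.maximalIdeal A, x ^ n0 = 0 := fun x hx => by
    have h := Ideal.pow_mem_pow hx n0; rw [hn0] at h; simpa using h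
  have hNa : ∀ e, n0 ≤ e → a ^ e = 0 := fun e he => pow_eq_zero_of_le he (hnil a ha)
  have hNb : ∀ e, n0 ≤ e → b ^ e = 0 := fun e he => pow_eq_zero_of_le he (hnil b hb)
  rw [master a b n0 (hnil a ha) (hnil b hb) j k hj hk ε hε] at hI
  constructor
  · intro hpos
    rw [hI]
    apply Finset.sum_eq_zero
    intro p hp
    have hne : ¬(j * ((p.1:ℤ) + 1) + k * ((p.2:ℤ) + 1) = 0) := by
      have c1 : (0:ℤ) ≤ (p.1:ℤ) := Int.natCast_nonneg p.1
      have c2 : (0:ℤ) ≤ (p.2:ℤ) := Int.natCast_nonneg p.2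
      intro hzero
      rcases mul_pos_iff.1 hpos with ⟨h1, h2⟩ | ⟨h1, h2⟩ <;> nlinarith
    rw [if_neg hne, zero_smul]
  · intro hneg
    set J : ℕ := j.natAbs with hJdef
    set K : ℕ := k.natAbs with hKdef
    set d : ℕ := Nat.gcd J K with hddef
    set J' : ℕ := J / d with hJ'def
    set K' : ℕ := K / d with hK'def
    have hJpos : 0 < J := Int.natAbs_pos.2 hj
    have hKpos : 0 < K := Int.natAbs_pos.2 hk
    have hdpos : 0 < d := Nat.gcd_pos_of_pos_left _ hJpos
    have hJd : J = d * J' := (Nat.mul_div_cancel' (Nat.gcd_dvd_left J K)).symm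
    have hKd : K = d * K' := (Nat.mul_div_cancel' (Nat.gcd_dvd_right J K)).symm
    have cop : Nat.Coprime J' K' := Nat.coprime_div_gcd_div_gcd hdpos
    have hJ'pos : 0 < J' := Nat.div_pos (Nat.le_of_dvd hJpos (Nat.gcd_dvd_left J K)) hdpos
    have hK'pos : 0 < K' := Nat.div_pos (Nat.le_of_dvd hKpos (Nat.gcd_dvd_right J K)) hdpos
    set u : A := a ^ K' * b ^ J' with hudef
    have hu : ∀ e, n0 ≤ e → u ^ e = 0 := by
      intro e he
      rw [hudef, mul_pow, ← pow_mul, hNa (K' * e) (le_trans he (Nat.le_mul_of_pos_left e hK'pos)),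
        zero_mul]
    have hlog : logOneSub u = -∑ r ∈ Finset.range n0, ((r:ℂ) + 1)⁻¹ • u ^ (r + 1) := by
      rw [logOneSub]
      congr 1
      apply tsum_eq_sum
      intro r hr
      have hnr : n0 ≤ r := le_of_not_gt fun hlt => hr (Finset.mem_range.2 hlt)
      rw [hu (r + 1) (hnr.trans (Nat.le_succ r)), smul_zero]
    have hRHS : algebraMap ℂ A (2 * Real.pi * Complex.I * (j.sign : ℂ) * (d : ℂ)) * logOneSub u
        = ∑ r ∈ Finset.range n0,
            (-(cc * (j.sign : ℂ) * (d : ℂ)) * ((r:ℂ) + 1)⁻¹) • u ^ (r + 1) := by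
      rw [hlog, mul_neg, Finset.mul_sum, ← Finset.sum_neg_distrib]
      refine Finset.sum_congr rfl fun r _ => ?_
      have hkey : ∀ (C x : ℂ) (v : A), -(algebraMap ℂ A C * (x • v)) = (-(C * x)) • v :=
        fun C x v => by rw [Algebra.smul_def, Algebra.smul_def, map_neg, map_mul, neg_mul, mul_assoc]
      rw [hkey]
      congr 1
      rw [cc]
      ring
    rw [hI, hRHS]
    -- sign cases
    rcases mul_neg_iff.1 hneg with ⟨hj1, hk1⟩ | ⟨hj1, hk1⟩
    · -- 0 < j, k < 0 : σ = -1, j.sign = 1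
      have hjZ : ((J : ℤ)) = j := Int.natAbs_of_nonneg hj1.le
      have hkZ : ((K : ℤ)) = -k := Int.ofNat_natAbs_of_nonpos hk1.le
      have hkc : (k : ℂ) = -(K : ℂ) := by
        have h' : ((K : ℤ) : ℂ) = ((-k : ℤ) : ℂ) := by rw [hkZ]
        push_cast at h'
        linear_combination h'
      have hcongr : ∀ p ∈ Finset.range n0 ×ˢ Finset.range n0,
          (if j * ((p.1:ℤ) + 1) + k * ((p.2:ℤ) + 1) = 0 then (k:ℂ) * cc / ((p.1:ℂ) + 1) else 0)
            • (a ^ (p.1 + 1) * b ^ (p.2 + 1))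
          = (if J * (p.1 + 1) = K * (p.2 + 1) then (-1 : ℂ) * (K:ℂ) * cc / ((p.1:ℂ) + 1) else 0)
            • (a ^ (p.1 + 1) * b ^ (p.2 + 1)) := by
        intro p _
        congr 1
        refine if_congr ?_ (by rw [hkc]; ring) rfl
        constructor
        · intro h
          have : (J:ℤ) * ((p.1:ℤ) + 1) = (K:ℤ) * ((p.2:ℤ) + 1) := by
            rw [hjZ, hkZ]; linarith
          exact_mod_cast this
        · intro h
          have h' : (J:ℤ) * ((p.1:ℤ) + 1) = (K:ℤ) * ((p.2:ℤ) + 1) := by exact_mod_cast h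
          rw [hjZ, hkZ] at h'
          linarith
      rw [Finset.sum_congr rfl hcongr,
        reindex a b n0 J K d J' K' (-1) hdpos hNa hNb hJd hKd cop hJ'pos hK'pos]
      refine Finset.sum_congr rfl fun r _ => ?_
      congr 1
      rw [Int.sign_eq_one_of_pos hj1]
      push_cast
      ring
    · -- j < 0, 0 < k : σ = 1, j.sign = -1
      have hjZ : ((J : ℤ)) = -j := Int.ofNat_natAbs_of_nonpos hj1.le
      have hkZ : ((K : ℤ)) = k := Int.natAbs_of_nonneg hk1.le
      have hkc : (k : ℂ) = (K : ℂ) := by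
        have h' : ((K : ℤ) : ℂ) = ((k : ℤ) : ℂ) := by rw [hkZ]
        push_cast at h'
        linear_combination -h'
      have hcongr : ∀ p ∈ Finset.range n0 ×ˢ Finset.range n0,
          (if j * ((p.1:ℤ) + 1) + k * ((p.2:ℤ) + 1) = 0 then (k:ℂ) * cc / ((p.1:ℂ) + 1) else 0)
            • (a ^ (p.1 + 1) * b ^ (p.2 + 1))
          = (if J * (p.1 + 1) = K * (p.2 + 1) then (1 : ℂ) * (K:ℂ) * cc / ((p.1:ℂ) + 1) else 0)
            • (a ^ (p.1 + 1) * b ^ (p.2 + 1)) := by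
        intro p _
        congr 1
        refine if_congr ?_ (by rw [hkc]; ring) rfl
        constructor
        · intro h
          have : (J:ℤ) * ((p.1:ℤ) + 1) = (K:ℤ) * ((p.2:ℤ) + 1) := by
            rw [hjZ, hkZ]; linarith
          exact_mod_cast this
        · intro h
          have h' : (J:ℤ) * ((p.1:ℤ) + 1) = (K:ℤ) * ((p.2:ℤ) + 1) := by exact_mod_cast h
          rw [hjZ, hkZ] at h'
          linarith
      rw [Finset.sum_congr rfl hcongr,
        reindex a b n0 J K d J' K' 1 hdpos hNa hNb hJd hKd cop hJ'pos hK'pos]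
      refine Finset.sum_congr rfl fun r _ => ?_
      congr 1
      rw [Int.sign_eq_neg_one_of_neg hj1]
      push_cast
      ring
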